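/- In the group G = D_{2,8,3} = ⟨x, y | x² = y⁸ = 1, x y x⁻¹ = y³⟩ of order 16, the subgroup G° = ⟨x, y²⟩ is isomorphic to the dihedral group D_4 of order 8, and: (i) the centralizer of x in G is ⟨x, y⁴⟩, which is contained in G°; (ii) for every g ∈ G \ G°, g² ∈ ⟨y⟩ and g² is not conjugate in G° to x. -/
import Mathlib

set_option maxHeartbeats 4000000

private def MD : Type := ZMod 8 × ZMod 2

private instance : Fintype MD := inferInstanceAs (Fintype (ZMod 8 × ZMod 2))
private instance : DecidableEq MD := inferInstanceAs (DecidableEq (ZMod 8 × ZMod 2))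

private instance : Group MD where
  mul a b := (a.1 + (if a.2 = 0 then b.1 else 3 * b.1), a.2 + b.2)
  one := ((0 : ZMod 8), (0 : ZMod 2))
  inv a := (if a.2 = 0 then -a.1 else -(3 * a.1), a.2)
  mul_assoc := by decide
  one_mul := by decide
  mul_one := by decide
  inv_mul_cancel := by decide

private def xM : MD := (0, 1)
private def yM : MD := (1, 0)

private def dmap : DihedralGroup 4 → MD
  | .r i => (((6 * i.val : ℕ) : ZMod 8), 0)
  | .sr i => (((2 * i.val : ℕ) : ZMod 8), 1)

private def dHom : DihedralGroup 4 →* MD where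
  toFun := dmap
  map_one' := by decide
  map_mul' := by decide

private def K : Subgroup MD where
  carrier := {m | m.1.val % 2 = 0}
  mul_mem' := fun {a b} ha hb =>
    (by decide : ∀ a b : MD, a.1.val % 2 = 0 → b.1.val % 2 = 0 → (a * b).1.val % 2 = 0) a b ha hb
  one_mem' := by decide
  inv_mem' := fun {a} ha =>
    (by decide : ∀ a : MD, a.1.val % 2 = 0 → (a⁻¹).1.val % 2 = 0) a ha

private def K2 : Subgroup MD where
  carrier := {m | m.1 = 0 ∨ m.1 = 4}
  mul_mem' := fun {a b} ha hb =>
    (by decide : ∀ a b : MD, (a.1 = 0 ∨ a.1 = 4) → (b.1 = 0 ∨ b.1 = 4) →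
      ((a * b).1 = 0 ∨ (a * b).1 = 4)) a b ha hb
  one_mem' := by decide
  inv_mem' := fun {a} ha =>
    (by decide : ∀ a : MD, (a.1 = 0 ∨ a.1 = 4) → ((a⁻¹).1 = 0 ∨ (a⁻¹).1 = 4)) a ha

private lemma dmem : ∀ d : DihedralGroup 4, dHom d ∈ K :=
  (by decide : ∀ d : DihedralGroup 4, (dmap d).1.val % 2 = 0)

private def dHomK : DihedralGroup 4 →* K := dHom.codRestrict K dmem

private lemma dHomK_bij : Function.Bijective dHomK := by
  constructor
  · intro a b h
    exact (by decide : ∀ a b : DihedralGroup 4, dmap a = dmap b → a = b) a b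
      (congrArg Subtype.val h)
  · rintro ⟨m, hm⟩
    obtain ⟨d, hd⟩ := (by decide : ∀ m : MD, m.1.val % 2 = 0 → ∃ d, dmap d = m) m hm
    exact ⟨d, Subtype.ext hd⟩

private noncomputable def dEquivK : DihedralGroup 4 ≃* K :=
  MulEquiv.ofBijective dHomK dHomK_bij

theorem D283_mixed_conditions {G : Type*} [Group G] (hG : Nat.card G = 16)
    (x y : G) (hx : x ^ 2 = 1) (hy : y ^ 8 = 1) (hconj : x * y * x⁻¹ = y ^ 3)
    (hgen : Subgroup.closure {x, y} = ⊤) :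
    Nonempty (↥(Subgroup.closure {x, y ^ 2}) ≃* DihedralGroup 4) ∧
    Subgroup.centralizer {x} = Subgroup.closure {x, y ^ 4} ∧
    Subgroup.closure {x, y ^ 4} ≤ Subgroup.closure {x, y ^ 2} ∧
    (∀ g : G, g ∉ Subgroup.closure {x, y ^ 2} →
      g ^ 2 ∈ Subgroup.zpowers y ∧
      ∀ σ ∈ Subgroup.closure {x, y ^ 2}, g ^ 2 ≠ σ * x * σ⁻¹) := by
  have h1 : x * y = y ^ 3 * x := mul_inv_eq_iff_eq_mul.mp hconj
  have ymod : ∀ m : ℕ, y ^ m = y ^ (m % 8) := fun m => by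
    conv_lhs => rw [← Nat.div_add_mod m 8]
    rw [pow_add, pow_mul, hy, one_pow, one_mul]
  have xmod : ∀ m : ℕ, x ^ m = x ^ (m % 2) := fun m => by
    conv_lhs => rw [← Nat.div_add_mod m 2]
    rw [pow_add, pow_mul, hx, one_pow, one_mul]
  have yv : ∀ m n : ℕ, m % 8 = n % 8 → y ^ m = y ^ n := fun m n h => by
    rw [ymod m, ymod n, h]
  have xv : ∀ m n : ℕ, m % 2 = n % 2 → x ^ m = x ^ n := fun m n h => by
    rw [xmod m, xmod n, h]
  have hxyn : ∀ n : ℕ, x * y ^ n = y ^ (3 * n) * x := by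
    intro n; induction n with
    | zero => simp
    | succ n ih =>
      have h3 : 3 * n + 3 = 3 * (n + 1) := by ring
      calc x * y ^ (n + 1) = x * y ^ n * y := by rw [pow_succ, mul_assoc]
        _ = y ^ (3 * n) * (x * y) := by rw [ih, mul_assoc]
        _ = y ^ (3 * n) * y ^ 3 * x := by rw [h1, mul_assoc]
        _ = y ^ (3 * (n + 1)) * x := by rw [← pow_add, h3]
  have hxyp : ∀ s m : ℕ, x ^ s * y ^ m = y ^ (3 ^ s * m) * x ^ s := by
    intro s
    induction s with
    | zero => intro m; simp
    | succ s ih =>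
      intro m
      have h3 : 3 ^ s * (3 * m) = 3 ^ (s + 1) * m := by ring
      calc x ^ (s + 1) * y ^ m = x ^ s * (x * y ^ m) := by rw [pow_succ, mul_assoc]
        _ = x ^ s * y ^ (3 * m) * x := by rw [hxyn, mul_assoc]
        _ = y ^ (3 ^ s * (3 * m)) * x ^ s * x := by rw [ih]
        _ = y ^ (3 ^ (s + 1) * m) * x ^ (s + 1) := by rw [h3, mul_assoc, ← pow_succ]
  have hform : ∀ i j k l : ℕ, (y ^ i * x ^ j) * (y ^ k * x ^ l) =
      y ^ (i + 3 ^ j * k) * x ^ (j + l) := by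
    intro i j k l
    calc (y ^ i * x ^ j) * (y ^ k * x ^ l) = y ^ i * (x ^ j * y ^ k) * x ^ l := by group
      _ = y ^ i * (y ^ (3 ^ j * k) * x ^ j) * x ^ l := by rw [hxyp]
      _ = y ^ (i + 3 ^ j * k) * x ^ (j + l) := by rw [pow_add, pow_add]; group
  let F : MD →* G :=
    { toFun := fun a => y ^ a.1.val * x ^ a.2.val
      map_one' := by
        show y ^ (0 : ZMod 8).val * x ^ (0 : ZMod 2).val = 1
        simp
      map_mul' := by
        rintro ⟨a, s⟩ ⟨b, t⟩
        rcases (by decide : ∀ s : ZMod 2, s = 0 ∨ s = 1) s with rfl | rfl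
        · show y ^ ((a + b : ZMod 8)).val * x ^ ((0 + t : ZMod 2)).val
            = (y ^ a.val * x ^ (0 : ZMod 2).val) * (y ^ b.val * x ^ t.val)
          rw [hform, show (0 : ZMod 2).val = 0 from rfl]
          rw [yv ((a + b : ZMod 8)).val (a.val + 3 ^ 0 * b.val)
            (by rw [ZMod.val_add]; omega)]
          rw [xv ((0 + t : ZMod 2)).val (0 + t.val) (by rw [zero_add, Nat.zero_add])]
        · show y ^ ((a + 3 * b : ZMod 8)).val * x ^ ((1 + t : ZMod 2)).val
            = (y ^ a.val * x ^ (1 : ZMod 2).val) * (y ^ b.val * x ^ t.val)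
          rw [hform, show (1 : ZMod 2).val = 1 from rfl]
          rw [yv ((a + 3 * b : ZMod 8)).val (a.val + 3 ^ 1 * b.val)
            (by rw [ZMod.val_add, ZMod.val_mul, show (3 : ZMod 8).val = 3 from rfl]
                simp only [pow_one]; omega)]
          rw [xv ((1 + t : ZMod 2)).val (1 + t.val)
            (by rw [ZMod.val_add, show (1 : ZMod 2).val = 1 from rfl]; omega)] }
  have hFx : F xM = x := by
    show y ^ (0 : ZMod 8).val * x ^ (1 : ZMod 2).val = x
    simp [show (0 : ZMod 8).val = 0 from rfl, show (1 : ZMod 2).val = 1 from rfl]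
  have hFy : F yM = y := by
    show y ^ (1 : ZMod 8).val * x ^ (0 : ZMod 2).val = y
    simp [show (1 : ZMod 8).val = 1 from rfl, show (0 : ZMod 2).val = 0 from rfl]
  have hsurj : Function.Surjective F := by
    rw [← MonoidHom.range_eq_top, ← top_le_iff, ← hgen, Subgroup.closure_le]
    rintro g (rfl | rfl)
    · exact ⟨xM, hFx⟩
    · exact ⟨yM, hFy⟩
  have hcard : Nat.card MD = 16 := by
    rw [Nat.card_eq_fintype_card]; rfl
  have hbij : Function.Bijective F :=
    (Nat.bijective_iff_surjective_and_card F).mpr ⟨hsurj, by rw [hcard, hG]⟩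
  -- closure of {xM, yM ^ 2} is K
  have hK_cl : Subgroup.closure ({xM, yM ^ 2} : Set MD) = K := by
    refine le_antisymm ((Subgroup.closure_le _).mpr ?_) ?_
    · rintro m (rfl | rfl)
      · show xM.1.val % 2 = 0; decide
      · show ((yM ^ 2 : MD)).1.val % 2 = 0; decide
    · intro m hm
      obtain ⟨i, -, j, -, rfl⟩ :=
        (by decide : ∀ m : MD, m.1.val % 2 = 0 → ∃ i < 4, ∃ j < 2,
          m = (yM ^ 2) ^ i * xM ^ j) m hm
      exact mul_mem (pow_mem (Subgroup.subset_closure (by simp)) i)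
        (pow_mem (Subgroup.subset_closure (by simp)) j)
  have hK2_cl : Subgroup.closure ({xM, yM ^ 4} : Set MD) = K2 := by
    refine le_antisymm ((Subgroup.closure_le _).mpr ?_) ?_
    · rintro m (rfl | rfl)
      · show xM.1 = 0 ∨ xM.1 = 4; decide
      · show ((yM ^ 4 : MD)).1 = 0 ∨ ((yM ^ 4 : MD)).1 = 4; decide
    · intro m hm
      obtain ⟨i, -, j, -, rfl⟩ :=
        (by decide : ∀ m : MD, (m.1 = 0 ∨ m.1 = 4) → ∃ i < 2, ∃ j < 2,
          m = (yM ^ 4) ^ i * xM ^ j) m hm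
      exact mul_mem (pow_mem (Subgroup.subset_closure (by simp)) i)
        (pow_mem (Subgroup.subset_closure (by simp)) j)
  have hmapK : Subgroup.map F K = Subgroup.closure {x, y ^ 2} := by
    rw [← hK_cl, MonoidHom.map_closure, Set.image_insert_eq, Set.image_singleton,
      hFx, map_pow, hFy]
  have hmapK2 : Subgroup.map F K2 = Subgroup.closure {x, y ^ 4} := by
    rw [← hK2_cl, MonoidHom.map_closure, Set.image_insert_eq, Set.image_singleton,
      hFx, map_pow, hFy]
  refine ⟨?_, ?_, ?_, ?_⟩
  · rw [← hmapK]
    exact ⟨(dEquivK.trans (K.equivMapOfInjective F hbij.injective)).symm⟩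
  · rw [← hmapK2]
    ext g
    obtain ⟨m, rfl⟩ := hsurj g
    rw [Subgroup.mem_centralizer_singleton_iff,
      Subgroup.mem_map_iff_mem hbij.injective]
    constructor
    · intro h
      exact (by decide : ∀ m : MD, m * xM = xM * m → (m.1 = 0 ∨ m.1 = 4)) m
        (hbij.injective (by rwa [map_mul, map_mul, hFx]))
    · intro h
      have := congrArg F ((by decide : ∀ m : MD, (m.1 = 0 ∨ m.1 = 4) →
        m * xM = xM * m) m h)
      rwa [map_mul, map_mul, hFx] at this
  · rw [← hmapK, ← hmapK2]
    exact Subgroup.map_mono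
      (fun m hm => (by decide : ∀ m : MD, (m.1 = 0 ∨ m.1 = 4) → m.1.val % 2 = 0) m hm)
  · intro g hg
    rw [← hmapK] at hg
    obtain ⟨m, rfl⟩ := hsurj g
    have hm : ¬ (m.1.val % 2 = 0) := fun h => hg (Subgroup.mem_map_of_mem F h)
    constructor
    · obtain ⟨i, -, hi⟩ :=
        (by decide : ∀ m : MD, ¬(m.1.val % 2 = 0) → ∃ i < 8, m ^ 2 = yM ^ i) m hm
      exact ⟨(i : ℤ), by
        show y ^ (i : ℤ) = F m ^ 2
        rw [zpow_natCast, ← hFy, ← map_pow, ← hi, map_pow]⟩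
    · intro σ hσ
      rw [← hmapK] at hσ
      obtain ⟨τ, hτ, rfl⟩ := hσ
      intro heq
      have hMeq : m ^ 2 = τ * xM * τ⁻¹ := by
        apply hbij.injective
        rw [map_pow, map_mul, map_mul, map_inv, hFx]
        exact heq
      exact (by decide : ∀ m τ : MD, ¬(m.1.val % 2 = 0) → τ.1.val % 2 = 0 →
        ¬ (m ^ 2 = τ * xM * τ⁻¹)) m τ hm hτ hMeq
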